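/- Under the modified DQM condition, the deterministic inner-product expansion 2 ∫ f₀(x) r_n(x) dμ(x) = −(1/(4n)) tᵀ J t + o(1/n) holds as n → ∞, where t = (δ₁², δ₂ᵀ)ᵀ; equivalently, 2⟨f₀, r_n⟩_{L²(μ)} = −∫ (h_nᵀ v(x))² dμ(x) + o(‖h_n‖²). -/

import Mathlib

open MeasureTheory Filter Topology Asymptotics ProbabilityTheory
open scoped BigOperators ENNReal NNReal

private lemma mulInt {𝒳 : Type*} [MeasurableSpace 𝒳] {μ : Measure 𝒳}
    {f g : 𝒳 → ℝ} (hf : MemLp f 2 μ) (hg : MemLp g 2 μ) :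
    Integrable (fun x => f x * g x) μ := by
  have h : MemLp (f • g) 1 μ := hg.smul hf (hpqr := ⟨by norm_num [ENNReal.inv_two_add_inv_two]⟩)
  exact memLp_one_iff_integrable.mp h

private lemma csInt {𝒳 : Type*} [MeasurableSpace 𝒳] {μ : Measure 𝒳}
    {f g : 𝒳 → ℝ} (hf : MemLp f 2 μ) (hg : MemLp g 2 μ) :
    (∫ x, f x * g x ∂μ) ^ 2 ≤ (∫ x, f x ^ 2 ∂μ) * (∫ x, g x ^ 2 ∂μ) := by
  have key : ∀ t : ℝ,
      0 ≤ (∫ x, f x ^ 2 ∂μ) * (t * t) + (2 * ∫ x, f x * g x ∂μ) * t + ∫ x, g x ^ 2 ∂μ := by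
    intro t
    have i1 : Integrable (fun x => f x ^ 2) μ := hf.integrable_sq
    have i2 : Integrable (fun x => f x * g x) μ := mulInt hf hg
    have i3 : Integrable (fun x => g x ^ 2) μ := hg.integrable_sq
    have h0 : 0 ≤ ∫ x, (t * f x + g x) ^ 2 ∂μ := integral_nonneg fun x => sq_nonneg _
    have e : ∀ x, (t * f x + g x) ^ 2
        = ((t * t) * f x ^ 2 + (2 * t) * (f x * g x)) + g x ^ 2 := fun x => by ring
    have i12 : Integrable (fun x => (t * t) * f x ^ 2 + (2 * t) * (f x * g x)) μ :=
      (i1.const_mul (t * t)).add (i2.const_mul (2 * t))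
    rw [integral_congr_ae (Filter.Eventually.of_forall e),
      integral_add i12 i3,
      integral_add (i1.const_mul (t * t)) (i2.const_mul (2 * t)),
      integral_const_mul, integral_const_mul] at h0
    linarith
  have hd := discrim_le_zero key
  rw [discrim] at hd
  nlinarith [hd]

private lemma sqSqueeze {u v : ℕ → ℝ} (hub : ∀ n, (u n) ^ 2 ≤ v n)
    (hv : Tendsto v atTop (𝓝 0)) : Tendsto u atTop (𝓝 0) := by
  have hs : Tendsto (fun n => Real.sqrt (v n)) atTop (𝓝 0) := by
    have := (Real.continuous_sqrt.tendsto 0).comp hv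
    simpa [Function.comp_def] using this
  refine squeeze_zero_norm (fun n => ?_) hs
  rw [Real.norm_eq_abs, ← Real.sqrt_sq_eq_abs]
  exact Real.sqrt_le_sqrt (hub n)

private lemma core {𝒳 : Type*} [MeasurableSpace 𝒳] {μ : Measure 𝒳}
    (f0 w : 𝒳 → ℝ) (g r : ℕ → 𝒳 → ℝ)
    (hf0 : MemLp f0 2 μ) (hw : MemLp w 2 μ) (hg : ∀ n, MemLp (g n) 2 μ)
    (hf0sq : ∫ x, f0 x ^ 2 ∂μ = 1) (hgsq : ∀ n, ∫ x, g n x ^ 2 ∂μ = 1)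
    (hr : ∀ n x, r n x = g n x - f0 x - (Real.sqrt n)⁻¹ * w x)
    (hR : (fun n => ∫ x, r n x ^ 2 ∂μ) =o[atTop] (fun n : ℕ => 1 / (n : ℝ))) :
    (fun n : ℕ => 2 * ∫ x, f0 x * r n x ∂μ
        + (1 / (4 * (n : ℝ))) * (4 * ∫ x, w x ^ 2 ∂μ))
      =o[atTop] (fun n : ℕ => 1 / (n : ℝ)) := by
  have hrmem : ∀ n, MemLp (r n) 2 μ := by
    intro n
    have h2 : r n = g n - f0 - fun x => (Real.sqrt n)⁻¹ * w x := by
      funext x; simp only [Pi.sub_apply]; rw [hr n x]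
    rw [h2]; exact ((hg n).sub hf0).sub (hw.const_mul _)
  -- the fundamental identity
  have key : ∀ (n : ℕ) (c : ℝ), (∀ x, r n x = g n x - f0 x - c * w x) →
      2 * c * (∫ x, f0 x * w x ∂μ) + 2 * (∫ x, f0 x * r n x ∂μ)
        + c ^ 2 * (∫ x, w x ^ 2 ∂μ) + 2 * c * (∫ x, w x * r n x ∂μ)
        + (∫ x, r n x ^ 2 ∂μ) = 0 := by
    intro n c hrc
    have iA : Integrable (fun x => f0 x ^ 2) μ := hf0.integrable_sq
    have iB : Integrable (fun x => f0 x * w x) μ := mulInt hf0 hw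
    have iC : Integrable (fun x => f0 x * r n x) μ := mulInt hf0 (hrmem n)
    have iD : Integrable (fun x => w x ^ 2) μ := hw.integrable_sq
    have iE : Integrable (fun x => w x * r n x) μ := mulInt hw (hrmem n)
    have iF : Integrable (fun x => r n x ^ 2) μ := (hrmem n).integrable_sq
    have e1 : ∀ x, g n x ^ 2 =
        f0 x ^ 2 + (2 * c) * (f0 x * w x) + 2 * (f0 x * r n x)
          + c ^ 2 * w x ^ 2 + (2 * c) * (w x * r n x) + r n x ^ 2 := by
      intro x
      have h2 : g n x = f0 x + c * w x + r n x := by have := hrc x; linarith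
      rw [h2]; ring
    have i2 : Integrable (fun x => f0 x ^ 2 + (2 * c) * (f0 x * w x)) μ :=
      iA.add (iB.const_mul (2 * c))
    have i3 : Integrable (fun x => f0 x ^ 2 + (2 * c) * (f0 x * w x)
        + 2 * (f0 x * r n x)) μ := i2.add (iC.const_mul 2)
    have i4 : Integrable (fun x => f0 x ^ 2 + (2 * c) * (f0 x * w x)
        + 2 * (f0 x * r n x) + c ^ 2 * w x ^ 2) μ := i3.add (iD.const_mul (c ^ 2))
    have i5 : Integrable (fun x => f0 x ^ 2 + (2 * c) * (f0 x * w x)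
        + 2 * (f0 x * r n x) + c ^ 2 * w x ^ 2 + (2 * c) * (w x * r n x)) μ :=
      i4.add (iE.const_mul (2 * c))
    have expand := hgsq n
    rw [integral_congr_ae (Filter.Eventually.of_forall e1),
      integral_add i5 iF, integral_add i4 (iE.const_mul (2 * c)),
      integral_add i3 (iD.const_mul (c ^ 2)), integral_add i2 (iC.const_mul 2),
      integral_add iA (iB.const_mul (2 * c)),
      integral_const_mul, integral_const_mul, integral_const_mul, integral_const_mul,
      hf0sq] at expand
    linarith
  -- nonnegativity and Cauchy–Schwarz facts
  have hFcs : ∀ n, (∫ x, f0 x * r n x ∂μ) ^ 2 ≤ ∫ x, r n x ^ 2 ∂μ := by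
    intro n
    have := csInt hf0 (hrmem n)
    rw [hf0sq, one_mul] at this
    exact this
  have hEcs : ∀ n, (∫ x, w x * r n x ∂μ) ^ 2
      ≤ (∫ x, w x ^ 2 ∂μ) * ∫ x, r n x ^ 2 ∂μ := fun n => csInt hw (hrmem n)
  -- limits
  have tR : Tendsto (fun n : ℕ => (n : ℝ) * ∫ x, r n x ^ 2 ∂μ) atTop (𝓝 0) := by
    have h := hR.tendsto_div_nhds_zero
    refine h.congr fun n => ?_
    rw [div_div_eq_mul_div, div_one, mul_comm]
  have tR0 : Tendsto (fun n : ℕ => ∫ x, r n x ^ 2 ∂μ) atTop (𝓝 0) :=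
    hR.isBigO.trans_tendsto tendsto_one_div_atTop_nhds_zero_nat
  have ts : Tendsto (fun n : ℕ => (Real.sqrt n)⁻¹) atTop (𝓝 0) := by
    have := (Real.continuous_sqrt.tendsto 0).comp tendsto_one_div_atTop_nhds_zero_nat
    simp only [Function.comp_def, Real.sqrt_zero] at this
    refine this.congr fun n => ?_
    rw [one_div, Real.sqrt_inv]
  have tF' : Tendsto (fun n : ℕ => Real.sqrt n * ∫ x, f0 x * r n x ∂μ) atTop (𝓝 0) := by
    refine sqSqueeze (v := fun n : ℕ => (n : ℝ) * ∫ x, r n x ^ 2 ∂μ) (fun n => ?_) tR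
    have h1 : (Real.sqrt n * ∫ x, f0 x * r n x ∂μ) ^ 2
        = (n : ℝ) * (∫ x, f0 x * r n x ∂μ) ^ 2 := by
      rw [mul_pow, Real.sq_sqrt (Nat.cast_nonneg n)]
    rw [h1]
    exact mul_le_mul_of_nonneg_left (hFcs n) (Nat.cast_nonneg n)
  have tE' : Tendsto (fun n : ℕ => Real.sqrt n * ∫ x, w x * r n x ∂μ) atTop (𝓝 0) := by
    refine sqSqueeze
      (v := fun n : ℕ => (∫ x, w x ^ 2 ∂μ) * ((n : ℝ) * ∫ x, r n x ^ 2 ∂μ))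
      (fun n => ?_) (by simpa using tR.const_mul (∫ x, w x ^ 2 ∂μ))
    have h1 : (Real.sqrt n * ∫ x, w x * r n x ∂μ) ^ 2
        = (n : ℝ) * (∫ x, w x * r n x ∂μ) ^ 2 := by
      rw [mul_pow, Real.sq_sqrt (Nat.cast_nonneg n)]
    rw [h1]
    calc (n : ℝ) * (∫ x, w x * r n x ∂μ) ^ 2
        ≤ (n : ℝ) * ((∫ x, w x ^ 2 ∂μ) * ∫ x, r n x ^ 2 ∂μ) :=
          mul_le_mul_of_nonneg_left (hEcs n) (Nat.cast_nonneg n)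
      _ = (∫ x, w x ^ 2 ∂μ) * ((n : ℝ) * ∫ x, r n x ^ 2 ∂μ) := by ring
  have tE0 : Tendsto (fun n : ℕ => ∫ x, w x * r n x ∂μ) atTop (𝓝 0) := by
    refine sqSqueeze
      (v := fun n : ℕ => (∫ x, w x ^ 2 ∂μ) * ∫ x, r n x ^ 2 ∂μ)
      (fun n => hEcs n) (by simpa using tR0.const_mul (∫ x, w x ^ 2 ∂μ))
  have tsR' : Tendsto (fun n : ℕ => Real.sqrt n * ∫ x, r n x ^ 2 ∂μ) atTop (𝓝 0) := by
    have h := ts.mul tR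
    rw [zero_mul] at h
    refine h.congr' ?_
    filter_upwards [eventually_ge_atTop 1] with n hn
    have hn0 : (0 : ℝ) < (n : ℝ) := by exact_mod_cast hn
    have hs : Real.sqrt n * Real.sqrt n = (n : ℝ) := Real.mul_self_sqrt hn0.le
    have hsp : (0 : ℝ) < Real.sqrt n := Real.sqrt_pos.2 hn0
    rw [← hs]
    field_simp
    rw [Real.sqrt_sq hsp.le]
  -- the mean-zero property of the score in direction t
  have hI : (∫ x, f0 x * w x ∂μ) = 0 := by
    have ha : Tendsto (fun n : ℕ =>
        -(Real.sqrt n * ∫ x, f0 x * r n x ∂μ)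
          - ((Real.sqrt n)⁻¹ * ∫ x, w x ^ 2 ∂μ) / 2
          - (∫ x, w x * r n x ∂μ)
          - (Real.sqrt n * ∫ x, r n x ^ 2 ∂μ) / 2) atTop (𝓝 0) := by
      have := ((tF'.neg.sub ((ts.mul_const (∫ x, w x ^ 2 ∂μ)).div_const 2)).sub tE0).sub
        (tsR'.div_const 2)
      simpa using this
    have hb : Tendsto (fun _ : ℕ => ∫ x, f0 x * w x ∂μ) atTop (𝓝 0) := by
      refine ha.congr' ?_
      filter_upwards [eventually_ge_atTop 1] with n hn
      have hn0 : (0 : ℝ) < (n : ℝ) := by exact_mod_cast hn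
      have hsp : (0 : ℝ) < Real.sqrt n := Real.sqrt_pos.2 hn0
      have hc : Real.sqrt n * (Real.sqrt n)⁻¹ = 1 := mul_inv_cancel₀ hsp.ne'
      have hk := key n ((Real.sqrt n)⁻¹) (hr n)
      linear_combination (-(Real.sqrt n) / 2) * hk
        + ((∫ x, f0 x * w x ∂μ) + (Real.sqrt n)⁻¹ * (∫ x, w x ^ 2 ∂μ) / 2
            + (∫ x, w x * r n x ∂μ)) * hc
    exact tendsto_nhds_unique tendsto_const_nhds hb
  -- conclusion
  rw [isLittleO_iff_tendsto']
  · have hcomb : Tendsto (fun n : ℕ =>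
        -(2 * (Real.sqrt n * ∫ x, w x * r n x ∂μ))
          - (n : ℝ) * ∫ x, r n x ^ 2 ∂μ) atTop (𝓝 0) := by
      have := (tE'.const_mul 2).neg.sub tR
      simpa using this
    refine hcomb.congr' ?_
    filter_upwards [eventually_ge_atTop 1] with n hn
    have hn0 : (0 : ℝ) < (n : ℝ) := by exact_mod_cast hn
    have hsp : (0 : ℝ) < Real.sqrt n := Real.sqrt_pos.2 hn0
    have hc : Real.sqrt n * (Real.sqrt n)⁻¹ = 1 := mul_inv_cancel₀ hsp.ne'
    have hu : Real.sqrt n * Real.sqrt n = (n : ℝ) := Real.mul_self_sqrt hn0.le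
    have hk := key n ((Real.sqrt n)⁻¹) (hr n)
    rw [hI] at hk
    rw [div_div_eq_mul_div, div_one]
    have hstep : (2 * (∫ x, f0 x * r n x ∂μ)
        + 1 / (4 * (n : ℝ)) * (4 * ∫ x, w x ^ 2 ∂μ)) * (n : ℝ)
        = 2 * (n : ℝ) * (∫ x, f0 x * r n x ∂μ) + (∫ x, w x ^ 2 ∂μ) := by
      field_simp
    rw [hstep]
    linear_combination (-(Real.sqrt n * Real.sqrt n)) * hk
      + (((Real.sqrt n)⁻¹ * Real.sqrt n + 1) * (∫ x, w x ^ 2 ∂μ)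
          + 2 * Real.sqrt n * (∫ x, w x * r n x ∂μ)) * hc
      + ((∫ x, r n x ^ 2 ∂μ) + 2 * (∫ x, f0 x * r n x ∂μ)) * hu
  · filter_upwards [eventually_ge_atTop 1] with n hn h
    have hn0 : (0 : ℝ) < (n : ℝ) := by exact_mod_cast hn
    exact absurd h (one_div_ne_zero hn0.ne')

/-- Under the modified DQM condition, the deterministic inner-product
expansion `2⟨f₀, r_n⟩ = −(1/(4n)) tᵀJt + o(1/n)` holds as `n → ∞`. -/
theorem inner_product_remainder_expansion
    {𝒳 : Type*} [MeasurableSpace 𝒳] (μ : Measure 𝒳) [SigmaFinite μ]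
    {P : ℕ} (p : ℝ → (Fin P → ℝ) → 𝒳 → ℝ)
    (ξ₀ : ℝ) (θ : Fin P → ℝ)
    (hmeas : ∀ ξ' θ', Measurable (p ξ' θ'))
    (hnonneg : ∀ ξ' θ' x, 0 ≤ p ξ' θ' x)
    (hprob : ∀ ξ' θ', ∫ x, p ξ' θ' x ∂μ = 1)
    (vξ : 𝒳 → ℝ) (vθ : 𝒳 → Fin P → ℝ)
    (hvξmeas : Measurable vξ) (hvθmeas : ∀ j, Measurable fun x => vθ x j)
    (hvξ : MemLp vξ 2 μ) (hvθ : ∀ j, MemLp (fun x => vθ x j) 2 μ)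
    (hDQM : (fun q : ℝ × (Fin P → ℝ) =>
        ∫ x, (Real.sqrt (p q.1 q.2 x) - Real.sqrt (p ξ₀ θ x)
          - ((q.1 - ξ₀) ^ 2 * vξ x + ∑ j, (q.2 j - θ j) * vθ x j)) ^ 2 ∂μ)
        =o[𝓝 (ξ₀, θ)]
        (fun q : ℝ × (Fin P → ℝ) => (q.1 - ξ₀) ^ 4 + ∑ j, (q.2 j - θ j) ^ 2))
    (δ₁ : ℝ) (δ₂ : Fin P → ℝ)
    (ξn : ℕ → ℝ) (hξn : ∀ n, ξn n = ξ₀ + δ₁ * (n : ℝ) ^ (-(1 / 4 : ℝ)))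
    (θn : ℕ → Fin P → ℝ)
    (hθn : ∀ n j, θn n j = θ j + δ₂ j * (n : ℝ) ^ (-(1 / 2 : ℝ)))
    (r : ℕ → 𝒳 → ℝ)
    (hr : ∀ n x, r n x = Real.sqrt (p (ξn n) (θn n) x) - Real.sqrt (p ξ₀ θ x)
          - ((ξn n - ξ₀) ^ 2 * vξ x + ∑ j, (θn n j - θ j) * vθ x j))
    :
    (fun n : ℕ =>
        2 * ∫ x, Real.sqrt (p ξ₀ θ x) * r n x ∂μ
          + (1 / (4 * (n : ℝ))) * (4 * ∫ x, (δ₁ ^ 2 * vξ x + ∑ j, δ₂ j * vθ x j) ^ 2 ∂μ))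
      =o[atTop] (fun n : ℕ => 1 / (n : ℝ)) := by
  -- integrability of the densities
  have hint : ∀ ξ' θ', Integrable (p ξ' θ') μ := by
    intro ξ' θ'
    by_contra h
    have h1 := hprob ξ' θ'
    rw [integral_undef h] at h1
    exact zero_ne_one h1
  have hfmem : ∀ ξ' θ', MemLp (fun x => Real.sqrt (p ξ' θ' x)) 2 μ := by
    intro ξ' θ'
    rw [memLp_two_iff_integrable_sq ((hmeas ξ' θ').sqrt.aestronglyMeasurable)]
    refine (hint ξ' θ').congr ?_
    exact Filter.Eventually.of_forall fun x => (Real.sq_sqrt (hnonneg ξ' θ' x)).symm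
  have hsqint : ∀ ξ' θ', ∫ x, Real.sqrt (p ξ' θ' x) ^ 2 ∂μ = 1 := by
    intro ξ' θ'
    rw [integral_congr_ae (Filter.Eventually.of_forall fun x =>
      Real.sq_sqrt (hnonneg ξ' θ' x))]
    exact hprob ξ' θ'
  have hwmem : MemLp (fun x => δ₁ ^ 2 * vξ x + ∑ j, δ₂ j * vθ x j) 2 μ := by
    have h1 := hvξ.const_mul (δ₁ ^ 2)
    have h2 : MemLp (fun x => ∑ j, δ₂ j * vθ x j) 2 μ :=
      memLp_finset_sum Finset.univ (fun j _ => (hvθ j).const_mul (δ₂ j))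
    exact h1.add h2
  -- rpow facts
  have hpow : ∀ n : ℕ, ((n : ℝ) ^ (-(1 / 2 : ℝ))) = (Real.sqrt n)⁻¹ := by
    intro n
    rw [Real.rpow_neg (Nat.cast_nonneg n), Real.sqrt_eq_rpow]
  have hpow4 : ∀ n : ℕ, ((n : ℝ) ^ (-(1 / 4 : ℝ))) ^ 2 = (Real.sqrt n)⁻¹ := by
    intro n
    rw [← hpow n, ← Real.rpow_natCast ((n : ℝ) ^ (-(1 / 4 : ℝ))) 2,
      ← Real.rpow_mul (Nat.cast_nonneg n)]
    norm_num
  -- the remainder in the normalized form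
  have hr' : ∀ n x, r n x = Real.sqrt (p (ξn n) (θn n) x) - Real.sqrt (p ξ₀ θ x)
      - (Real.sqrt n)⁻¹ * (δ₁ ^ 2 * vξ x + ∑ j, δ₂ j * vθ x j) := by
    intro n x
    rw [hr n x]
    have hA : (ξn n - ξ₀) ^ 2 = δ₁ ^ 2 * (Real.sqrt n)⁻¹ := by
      have : ξn n - ξ₀ = δ₁ * (n : ℝ) ^ (-(1 / 4 : ℝ)) := by rw [hξn]; ring
      rw [this, mul_pow, hpow4]
    have hsum : ∑ j, (θn n j - θ j) * vθ x j
        = (Real.sqrt n)⁻¹ * ∑ j, δ₂ j * vθ x j := by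
      rw [Finset.mul_sum]
      refine Finset.sum_congr rfl fun j _ => ?_
      rw [hθn, hpow n]
      ring
    rw [hA, hsum]
    ring
  -- the convergence of the parameter sequence
  have h14 : Tendsto (fun n : ℕ => (n : ℝ) ^ (-(1 / 4 : ℝ))) atTop (𝓝 0) :=
    (tendsto_rpow_neg_atTop (by norm_num)).comp tendsto_natCast_atTop_atTop
  have h12 : Tendsto (fun n : ℕ => (n : ℝ) ^ (-(1 / 2 : ℝ))) atTop (𝓝 0) :=
    (tendsto_rpow_neg_atTop (by norm_num)).comp tendsto_natCast_atTop_atTop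
  have hξt : Tendsto ξn atTop (𝓝 ξ₀) := by
    have h := (h14.const_mul δ₁).const_add ξ₀
    simp only [mul_zero, add_zero] at h
    exact h.congr fun n => (hξn n).symm
  have hθt : Tendsto θn atTop (𝓝 θ) := by
    rw [tendsto_pi_nhds]
    intro j
    have h := (h12.const_mul (δ₂ j)).const_add (θ j)
    simp only [mul_zero, add_zero] at h
    exact h.congr fun n => (hθn n j).symm
  have htend : Tendsto (fun n : ℕ => (ξn n, θn n)) atTop (𝓝 (ξ₀, θ)) :=
    hξt.prodMk_nhds hθt
  -- the little-o bound on the remainder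
  have hR : (fun n : ℕ => ∫ x, r n x ^ 2 ∂μ) =o[atTop] (fun n : ℕ => 1 / (n : ℝ)) := by
    have hcomp := hDQM.comp_tendsto htend
    have eL : ((fun q : ℝ × (Fin P → ℝ) =>
        ∫ x, (Real.sqrt (p q.1 q.2 x) - Real.sqrt (p ξ₀ θ x)
          - ((q.1 - ξ₀) ^ 2 * vξ x + ∑ j, (q.2 j - θ j) * vθ x j)) ^ 2 ∂μ)
          ∘ (fun n : ℕ => (ξn n, θn n)))
        =ᶠ[atTop] (fun n : ℕ => ∫ x, r n x ^ 2 ∂μ) := by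
      refine Filter.Eventually.of_forall fun n => ?_
      simp only [Function.comp_apply]
      exact integral_congr_ae (Filter.Eventually.of_forall fun x =>
        congrArg (fun y : ℝ => y ^ 2) (hr n x).symm)
    have eR : ((fun q : ℝ × (Fin P → ℝ) => (q.1 - ξ₀) ^ 4 + ∑ j, (q.2 j - θ j) ^ 2)
          ∘ (fun n : ℕ => (ξn n, θn n)))
        =ᶠ[atTop] (fun n : ℕ => (δ₁ ^ 4 + ∑ j, δ₂ j ^ 2) * (1 / (n : ℝ))) := by
      refine Filter.Eventually.of_forall fun n => ?_
      simp only [Function.comp_apply]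
      have h4 : ((n : ℝ) ^ (-(1 / 4 : ℝ))) ^ 4 = 1 / (n : ℝ) := by
        rw [← Real.rpow_natCast ((n : ℝ) ^ (-(1 / 4 : ℝ))) 4,
          ← Real.rpow_mul (Nat.cast_nonneg n),
          show (-(1 / 4 : ℝ)) * ((4 : ℕ) : ℝ) = -1 by norm_num,
          Real.rpow_neg_one, one_div]
      have h2 : ((n : ℝ) ^ (-(1 / 2 : ℝ))) ^ 2 = 1 / (n : ℝ) := by
        rw [← Real.rpow_natCast ((n : ℝ) ^ (-(1 / 2 : ℝ))) 2,
          ← Real.rpow_mul (Nat.cast_nonneg n),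
          show (-(1 / 2 : ℝ)) * ((2 : ℕ) : ℝ) = -1 by norm_num,
          Real.rpow_neg_one, one_div]
      have ha : ξn n - ξ₀ = δ₁ * (n : ℝ) ^ (-(1 / 4 : ℝ)) := by rw [hξn]; ring
      have hsum : ∑ j, (θn n j - θ j) ^ 2 = (∑ j, δ₂ j ^ 2) * (1 / (n : ℝ)) := by
        rw [Finset.sum_mul]
        refine Finset.sum_congr rfl fun j _ => ?_
        have hb : θn n j - θ j = δ₂ j * (n : ℝ) ^ (-(1 / 2 : ℝ)) := by rw [hθn]; ring
        rw [hb, mul_pow, h2]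
      rw [ha, mul_pow, h4, hsum]
      ring
    refine (hcomp.congr' eL eR).trans_isBigO ?_
    exact (isBigO_refl (fun n : ℕ => 1 / (n : ℝ)) atTop).const_mul_left _
  exact core (fun x => Real.sqrt (p ξ₀ θ x))
    (fun x => δ₁ ^ 2 * vξ x + ∑ j, δ₂ j * vθ x j)
    (fun n x => Real.sqrt (p (ξn n) (θn n) x)) r
    (hfmem ξ₀ θ) hwmem (fun n => hfmem (ξn n) (θn n))
    (hsqint ξ₀ θ) (fun n => hsqint (ξn n) (θn n)) hr' hR
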